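/- arXiv:1307.2729 — 3 statements merged into one kernel-verified Lean document; each statement's English description precedes it below -/
import Mathlib

section
/- There exists a constant C₀ > 0 depending only on the integer n ≥ 3 with the following property. Let (X,d) be a compact metric space equipped with a finite Borel measure μ such that: (i) for every x ∈ X, μ(B(x,ρ))/ρⁿ → ω_n as ρ → 0⁺; (ii) for every x ∈ X the function ρ ↦ μ(B(x,ρ)) is continuous on (0,∞); (iii) X is geodesic, i.e. for all a,b ∈ X there exists γ : [0, d(a,b)] → X with γ(0) = a, γ(d(a,b)) = b and d(γ(s), γ(t)) = |s − t| for all s,t ∈ [0, d(a,b)]; (iv) there are constants A > 0, B ≥ 0 and a measurable function R : X → [0,∞) such that the (A,B,R)-Sobolev inequality holds at every x ∈ X up to scale 1. Then diam(X) ≤ C₀ (A + B + 1)^{n/2} (1 + μ(X) + ∫_X R^{(n−1)/2} dμ). -/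
open MeasureTheory Metric Set Filter
open scoped ENNReal NNReal

/-- The Lebesgue volume of the unit ball in `ℝⁿ`. -/
noncomputable def unitBallVol (n : ℕ) : ℝ :=
  (volume (Metric.ball (0 : EuclideanSpace ℝ (Fin n)) 1)).toReal

/-- The `(A,B,R)`-Sobolev inequality holds at `x` up to scale `r`:
for every `s ∈ (0,r]`, testing with the cutoff `v_{x,s}(y) = max (s - d(x,y)) 0`,
`(∫ v^{2n/(n-2)})^{(n-2)/n} ≤ A (4 μ(B(x,s)) + ∫ R v²) + B ∫ v²`. -/
noncomputable def SobolevAt {X : Type*} [MetricSpace X] [MeasurableSpace X]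
    (μ : Measure X) (n : ℕ) (A B : ℝ) (R : X → ℝ) (x : X) (r : ℝ) : Prop :=
  ∀ s ∈ Set.Ioc (0 : ℝ) r,
    (∫⁻ y, ENNReal.ofReal (max (s - dist x y) 0) ^ ((2 * (n : ℝ)) / ((n : ℝ) - 2)) ∂μ)
        ^ (((n : ℝ) - 2) / (n : ℝ))
      ≤ ENNReal.ofReal A * (4 * μ (Metric.ball x s)
            + ∫⁻ y, ENNReal.ofReal (R y)
                * ENNReal.ofReal (max (s - dist x y) 0) ^ (2 : ℝ) ∂μ)
        + ENNReal.ofReal B * ∫⁻ y, ENNReal.ofReal (max (s - dist x y) 0) ^ (2 : ℝ) ∂μ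

namespace DiamProof

noncomputable def eta (n : ℕ) : ℝ := min (((2:ℝ)^n)⁻¹) (unitBallVol n / 2)

noncomputable def cc (n : ℕ) : ℝ := eta n / 8^n

noncomputable def lam (n : ℕ) (A B : ℝ) : ℝ := ((2:ℝ)^(n+2) * (A+B+1)) ^ (-((n:ℝ)/2))

lemma unitBallVol_pos (n : ℕ) : 0 < unitBallVol n := by
  rw [unitBallVol]
  exact ENNReal.toReal_pos (ne_of_gt (measure_ball_pos _ _ one_pos)) measure_ball_lt_top.ne

lemma eta_pos (n : ℕ) : 0 < eta n :=
  lt_min (by positivity) (by linarith [unitBallVol_pos n])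

lemma eta_le_inv (n : ℕ) : eta n ≤ ((2:ℝ)^n)⁻¹ := min_le_left _ _

lemma eta_le_omega (n : ℕ) : eta n ≤ unitBallVol n / 2 := min_le_right _ _

lemma cc_pos (n : ℕ) : 0 < cc n := div_pos (eta_pos n) (by positivity)

lemma cc_le_eta (n : ℕ) : cc n ≤ eta n := by
  rw [cc]
  apply div_le_self (eta_pos n).le
  exact one_le_pow₀ (by norm_num)

lemma lam_pos (n : ℕ) {A B : ℝ} (hA : 0 < A) (hB : 0 ≤ B) : 0 < lam n A B :=
  Real.rpow_pos_of_pos (by positivity) _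

lemma lam_le_one (n : ℕ) {A B : ℝ} (hA : 0 < A) (hB : 0 ≤ B) : lam n A B ≤ 1 := by
  apply Real.rpow_le_one_of_one_le_of_nonpos
  · have h1 : (1:ℝ) ≤ (2:ℝ)^(n+2) := one_le_pow₀ (by norm_num)
    nlinarith
  · have : (0:ℝ) ≤ (n:ℝ)/2 := by positivity
    linarith

/-- Elementary Hölder consequence: `∫ g ≤ (∫ g^q)^(1/q) (ν univ)^(1-1/q)` for `q ≥ 1`. -/
lemma lintegral_le_rpow_mul {α : Type*} [MeasurableSpace α] (ν : Measure α)
    {g : α → ℝ≥0∞} (hg : Measurable g) {q : ℝ} (hq : 1 ≤ q) :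
    ∫⁻ a, g a ∂ν ≤ (∫⁻ a, g a ^ q ∂ν) ^ (1/q) * (ν Set.univ) ^ (1 - 1/q) := by
  rcases eq_or_lt_of_le hq with h1 | h1
  · simp [← h1]
  · have hpq : q.HolderConjugate (q/(q-1)) := Real.HolderConjugate.conjExponent h1
    have hle := ENNReal.lintegral_mul_le_Lp_mul_Lq ν hpq hg.aemeasurable
      (aemeasurable_const (b := (1:ℝ≥0∞)))
    simp only [Pi.mul_apply, mul_one, ENNReal.one_rpow, lintegral_one] at hle
    have hq0 : q ≠ 0 := by linarith
    have hq10 : q - 1 ≠ 0 := by intro h; rw [sub_eq_zero] at h; exact (by linarith : False)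
    have hexp : 1/(q/(q-1)) = 1 - 1/q := by
      field_simp
    rwa [hexp] at hle

lemma q_ge_one {n : ℕ} (hn : 3 ≤ n) : 1 ≤ ((n:ℝ)-1)/2 := by
  have hn3 : (3:ℝ) ≤ (n:ℝ) := by exact_mod_cast hn
  rw [le_div_iff₀ (by norm_num)]
  linarith

lemma contra_aux {A B P : ℝ} (hA : 0 < A) (hB : 0 ≤ B) (hP : 0 < P)
    (h : 16*(A+B+1)*P ≤ (5*A+B)*P) : False := by nlinarith

set_option maxHeartbeats 1000000 in
/-- The core numeric contradiction extracted from one application of the Sobolev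
inequality at a scale where the volume ratio drops below `ηλ`. -/
lemma core_contra (n : ℕ) (hn : 3 ≤ n) (A B s : ℝ) (hA : 0 < A) (hB : 0 ≤ B)
    (hs : 0 < s) (hs1 : s ≤ 1)
    (key : (eta n * lam n A B * (s/2)^n) ^ (((n:ℝ)-2)/(n:ℝ)) * ((s/2)^2)
      ≤ A * (4*(eta n * lam n A B * s^n)
          + s^2*((cc n * lam n A B * s) ^ (2/((n:ℝ)-1))
              * (eta n * lam n A B * s^n) ^ (1 - 2/((n:ℝ)-1))))
        + B * (s^2 * (eta n * lam n A B * s^n))) : False := by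
  have hn3 : (3:ℝ) ≤ (n:ℝ) := by exact_mod_cast hn
  have hn0 : (0:ℝ) < (n:ℝ) := by linarith
  have hη := eta_pos n
  have hcpos := cc_pos n
  have hl := lam_pos n hA hB
  set η := eta n with hηdef
  set c := cc n with hcdef
  set l := lam n A B with hldef
  set M : ℝ := (2:ℝ)^(n+2) * (A+B+1) with hMdef
  have hM0 : 0 < M := by positivity
  set θ : ℝ := ((n:ℝ)-2)/(n:ℝ) with hθdef
  set i : ℝ := 2/((n:ℝ)-1) with hidef
  have hi0 : 0 < i := by rw [hidef]; apply div_pos (by norm_num); linarith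
  have hi1 : (0:ℝ) ≤ 1 - i := by
    rw [hidef, sub_nonneg, div_le_one (by linarith)]; linarith
  have hθ0 : 0 ≤ θ := by rw [hθdef]; apply div_nonneg <;> linarith
  -- l ^ θ = l * M
  have hlθ : l ^ θ = l * M := by
    rw [hldef, lam, ← hMdef, ← Real.rpow_mul hM0.le]
    have h1 : -((n:ℝ)/2) * θ = -((n:ℝ)/2) + 1 := by
      rw [hθdef]; field_simp; ring
    rw [h1, Real.rpow_add hM0, Real.rpow_one]
  -- 4η ≤ η^θ
  have hηθ : 4 * η ≤ η ^ θ := by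
    have hθ1 : θ = 1 + (-(2/(n:ℝ))) := by rw [hθdef]; field_simp; ring
    rw [hθ1, Real.rpow_add hη, Real.rpow_one]
    have h2 : (4:ℝ) ≤ η ^ (-(2/(n:ℝ))) := by
      have hzneg : -(2/(n:ℝ)) ≤ 0 := by
        have : (0:ℝ) ≤ 2/(n:ℝ) := by positivity
        linarith
      have h3 := Real.rpow_le_rpow_of_nonpos hη (eta_le_inv n) hzneg
      have h4 : (((2:ℝ)^n)⁻¹) ^ (-(2/(n:ℝ))) = 4 := by
        rw [← Real.rpow_natCast (2:ℝ) n, ← Real.rpow_neg (by norm_num : (0:ℝ) ≤ 2),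
          ← Real.rpow_mul (by norm_num : (0:ℝ) ≤ 2)]
        have h5 : -(n:ℝ) * -(2/(n:ℝ)) = 2 := by field_simp
        rw [h5]
        calc (2:ℝ) ^ (2:ℝ) = (2:ℝ) ^ ((2:ℕ):ℝ) := by norm_num
          _ = (2:ℝ) ^ (2:ℕ) := Real.rpow_natCast 2 2
          _ = 4 := by norm_num
      rw [← h4]
      exact h3
    nlinarith
  -- LHS identity
  have h5 : (((s/2):ℝ)^n) ^ θ * ((s/2)^2) = (s/2)^n := by
    rw [← Real.rpow_natCast (s/2) n, ← Real.rpow_mul (by positivity),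
      ← Real.rpow_natCast (s/2) 2, ← Real.rpow_add (by positivity)]
    congr 1
    push_cast
    rw [hθdef]
    field_simp
    ring
  have hLHS : (η*l*(s/2)^n) ^ θ * ((s/2)^2) = (η^θ * l^θ) * ((s/2)^n) := by
    rw [Real.mul_rpow (by positivity) (by positivity), Real.mul_rpow hη.le hl.le,
      mul_assoc, h5]
  -- lower bound for the LHS
  have h2n : (0:ℝ) < 2^n := by positivity
  have hM4 : M = 4 * 2^n * (A+B+1) := by rw [hMdef, pow_add]; ring
  have hstep : 16*(A+B+1)*(η*l)*s^n ≤ (η*l*(s/2)^n) ^ θ * ((s/2)^2) := by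
    rw [hLHS, hlθ, div_pow]
    have hb : 16*(A+B+1)*(η*l)*s^n = (4*η) * (l*M) * (s^n/2^n) := by
      rw [hM4]; field_simp; ring
    rw [hb]
    have h6 : (4*η) * (l*M) ≤ η^θ * (l*M) :=
      mul_le_mul_of_nonneg_right hηθ (by positivity)
    apply mul_le_mul_of_nonneg_right h6 (by positivity)
  -- second term identity
  have hT2 : s^2*((c*l*s) ^ i * (η*l*s^n) ^ (1-i)) = (c^i * η^(1-i)) * l * s^n := by
    have h6 : ((s^n : ℝ)) ^ (1-i) = s ^ ((n:ℝ)*(1-i)) := by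
      rw [← Real.rpow_natCast s n, ← Real.rpow_mul hs.le]
    have h7 : (s^2 : ℝ) = s ^ ((2:ℝ)) := by
      rw [← Real.rpow_natCast s 2]; norm_num
    have hll : l^i * l^(1-i) = l := by
      rw [← Real.rpow_add hl]; norm_num
    have h8 : s ^ ((2:ℝ)) * (s^i * s^((n:ℝ)*(1-i))) = s ^ ((2:ℝ) + (i + (n:ℝ)*(1-i))) := by
      rw [Real.rpow_add hs, Real.rpow_add hs]
    have hexp : (2:ℝ) + (i + (n:ℝ)*(1-i)) = (n:ℝ) := by
      have hne : (n:ℝ) - 1 ≠ 0 := by intro h; rw [sub_eq_zero] at h; linarith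
      rw [hidef]; field_simp; ring
    calc s^2*((c*l*s) ^ i * (η*l*s^n) ^ (1-i))
        = s^2*((c^i * l^i * s^i) * (η^(1-i) * l^(1-i) * (s^n:ℝ)^(1-i))) := by
          rw [Real.mul_rpow (by positivity) hs.le, Real.mul_rpow hcpos.le hl.le,
            Real.mul_rpow (by positivity) (by positivity), Real.mul_rpow hη.le hl.le]
      _ = (c^i * η^(1-i)) * (l^i * l^(1-i)) * (s^((2:ℝ)) * (s^i * s^((n:ℝ)*(1-i)))) := by
          rw [h6, h7]; ring
      _ = (c^i * η^(1-i)) * l * s ^ ((2:ℝ) + (i + (n:ℝ)*(1-i))) := by rw [hll, h8]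
      _ = (c^i * η^(1-i)) * l * s ^ ((n:ℝ)) := by rw [hexp]
      _ = (c^i * η^(1-i)) * l * s^n := by rw [Real.rpow_natCast]
  -- upper bound for the RHS
  have hsq1 : s^2 ≤ 1 := by nlinarith
  have hsnn : (0:ℝ) ≤ s^n := pow_nonneg hs.le n
  have hPpos : (0:ℝ) < η * l * s^n := by positivity
  -- c^i η^(1-i) ≤ η
  have hci : c^i * η^(1-i) ≤ η := by
    have h10 : c^i ≤ η^i := Real.rpow_le_rpow hcpos.le (cc_le_eta n) hi0.le
    have h11 : c^i*η^(1-i) ≤ η^i*η^(1-i) :=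
      mul_le_mul_of_nonneg_right h10 (Real.rpow_nonneg hη.le _)
    have h12 : η^i*η^(1-i) = η := by
      rw [← Real.rpow_add hη]; norm_num
    linarith
  have hZ : s^2*((c*l*s) ^ i * (η*l*s^n) ^ (1-i)) ≤ η * l * s^n := by
    rw [hT2]
    have h13 : (c^i * η^(1-i)) * l ≤ η * l := mul_le_mul_of_nonneg_right hci hl.le
    exact mul_le_mul_of_nonneg_right h13 hsnn
  have hsp : s^2 * (η * l * s^n) ≤ η * l * s^n := by
    have h14 := mul_le_mul_of_nonneg_right hsq1 hPpos.le
    rwa [one_mul] at h14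
  have hRB : A * (4*(η*l*s^n) + s^2*((c*l*s) ^ i * (η*l*s^n) ^ (1-i))) + B * (s^2*(η*l*s^n))
      ≤ (5*A+B)*(η*l*s^n) := by
    have h14 := mul_le_mul_of_nonneg_left hZ hA.le
    have h15 := mul_le_mul_of_nonneg_left hsp hB
    nlinarith
  have hstep' : 16*(A+B+1)*(η*l*s^n) ≤ (η*l*(s/2)^n) ^ θ * ((s/2)^2) := by
    refine le_trans (le_of_eq ?_) hstep
    ring
  have hchain := le_trans hstep' (le_trans key hRB)
  have hfin : 16*(A+B+1)*(η*l*s^n) ≤ (5*A+B)*(η*l*s^n) := hchain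
  exact contra_aux hA hB hPpos hfin

set_option maxHeartbeats 1000000 in
/-- Per-point lemma: some ball of radius `≤ 1/2` has combined (volume + curvature)
content at least `c·λ·r`. -/
lemma exists_good_radius {X : Type} [MetricSpace X] [MeasurableSpace X] [BorelSpace X]
    (μ : Measure X) [IsFiniteMeasure μ] (n : ℕ) (hn : 3 ≤ n) (A B : ℝ) (R : X → ℝ)
    (hA : 0 < A) (hB : 0 ≤ B) (hR : Measurable R) (x : X)
    (hdens : Tendsto (fun ρ : ℝ => (μ (Metric.ball x ρ)).toReal / ρ ^ n)
      (nhdsWithin 0 (Set.Ioi 0)) (nhds (unitBallVol n)))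
    (hsob : SobolevAt μ n A B R x 1) :
    ∃ r ∈ Set.Ioc (0:ℝ) (1/2),
      ENNReal.ofReal (cc n * lam n A B * r)
        ≤ μ (Metric.ball x r)
          + ∫⁻ y in Metric.ball x r, ENNReal.ofReal (R y) ^ (((n:ℝ)-1)/2) ∂μ := by
  by_contra hcon
  push_neg at hcon
  have hn3 : (3:ℝ) ≤ (n:ℝ) := by exact_mod_cast hn
  have hn0 : (0:ℝ) < (n:ℝ) := by linarith
  have hη := eta_pos n
  have hcpos := cc_pos n
  have hl := lam_pos n hA hB
  set η := eta n with hηdef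
  set c := cc n with hcdef
  set l := lam n A B with hldef
  set f : ℝ → ℝ := fun t => (μ (Metric.ball x t)).toReal with hfdef
  -- strict smallness of f
  have hflt : ∀ r, r ∈ Set.Ioc (0:ℝ) (1/2) → f r < c * l * r := by
    intro r hr
    have h1 : μ (Metric.ball x r) < ENNReal.ofReal (c * l * r) :=
      lt_of_le_of_lt le_self_add (hcon r hr)
    have h2 := (ENNReal.toReal_lt_toReal (measure_ne_top μ _) ENNReal.ofReal_ne_top).mpr h1
    rwa [ENNReal.toReal_ofReal (mul_nonneg (mul_nonneg hcpos.le hl.le) hr.1.le)] at h2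
  -- base scale from density
  have homega : unitBallVol n / 2 < unitBallVol n := by linarith [unitBallVol_pos n]
  have hev : ∀ᶠ ρ in nhdsWithin (0:ℝ) (Set.Ioi 0),
      unitBallVol n / 2 < (μ (Metric.ball x ρ)).toReal / ρ ^ n :=
    hdens.eventually (eventually_gt_nhds homega)
  rw [eventually_iff, mem_nhdsGT_iff_exists_Ioc_subset] at hev
  obtain ⟨u0, hu0, hsubu⟩ := hev
  have hu0' : (0:ℝ) < u0 := hu0
  set σ₀ : ℝ := min u0 (1/2) with hσ₀def
  have hσ₀pos : 0 < σ₀ := lt_min hu0' (by norm_num)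
  set S : Set ℝ := {σ : ℝ | σ ∈ Set.Ioc (0:ℝ) (1/2) ∧
      ∀ t, t ∈ Set.Ioc (0:ℝ) σ → η * l * t^n ≤ f t} with hSdef
  have hηl2 : η * l ≤ unitBallVol n / 2 := by
    have h1 : η * l ≤ η * 1 := mul_le_mul_of_nonneg_left (lam_le_one n hA hB) hη.le
    have h2 := eta_le_omega n
    rw [mul_one] at h1
    linarith
  have hσ₀S : σ₀ ∈ S := by
    constructor
    · exact ⟨hσ₀pos, min_le_right _ _⟩
    · intro t ht
      have htu : t ∈ Set.Ioc (0:ℝ) u0 := ⟨ht.1, le_trans ht.2 (min_le_left _ _)⟩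
      have h3 : unitBallVol n / 2 < f t / t^n := hsubu htu
      have htn : (0:ℝ) < t^n := pow_pos ht.1 n
      have h4 : (unitBallVol n / 2) * t^n < f t := (lt_div_iff₀ htn).mp h3
      nlinarith
  have hSbdd : BddAbove S := ⟨1/2, fun σ hσ => hσ.1.2⟩
  set s₁ : ℝ := sSup S with hs₁def
  have hs₁ge : σ₀ ≤ s₁ := le_csSup hSbdd hσ₀S
  have hs₁pos : 0 < s₁ := lt_of_lt_of_le hσ₀pos hs₁ge
  have hs₁le : s₁ ≤ 1/2 := csSup_le ⟨σ₀, hσ₀S⟩ (fun σ hσ => hσ.1.2)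
  have hlow : ∀ t, 0 < t → t < s₁ → η * l * t^n ≤ f t := by
    intro t ht htlt
    obtain ⟨σ, hσS, hσgt⟩ := exists_lt_of_lt_csSup ⟨σ₀, hσ₀S⟩ htlt
    exact hσS.2 t ⟨ht, hσgt.le⟩
  have hfmono : ∀ a b : ℝ, a ≤ b → f a ≤ f b := fun a b hab =>
    ENNReal.toReal_mono (measure_ne_top μ _) (measure_mono (ball_subset_ball hab))
  by_cases h14 : (1/4 : ℝ) ≤ s₁
  · -- contradiction at r = 1/2
    have h5 : η * l * (1/5:ℝ)^n ≤ f (1/5) := hlow (1/5) (by norm_num) (by linarith)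
    have h6 : f (1/5) ≤ f (1/2) := hfmono _ _ (by norm_num)
    have h7 : f (1/2) < c * l * (1/2) := hflt (1/2) ⟨by norm_num, le_refl _⟩
    have h58 : (5:ℝ)^n ≤ 2 * 8^n := by
      have h := pow_le_pow_left₀ (by norm_num : (0:ℝ) ≤ 5) (by norm_num : (5:ℝ) ≤ 8) n
      nlinarith [pow_pos (show (0:ℝ) < 8 by norm_num) n]
    have h9 : c * l * (1/2) ≤ η * l * (1/5:ℝ)^n := by
      have h1ineq : ((1:ℝ)/5)^n = 1/5^n := by rw [div_pow]; norm_num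
      rw [h1ineq]
      have h2ineq : (1:ℝ)/(2*8^n) ≤ 1/5^n :=
        one_div_le_one_div_of_le (by positivity) h58
      have hc8 : c = η / 8^n := rfl
      rw [hc8]
      have hpos8 : (0:ℝ) < 8^n := by positivity
      calc η/8^n * l * (1/2) = (η*l) * (1/(2*8^n)) := by field_simp
        _ ≤ (η*l) * (1/5^n) := mul_le_mul_of_nonneg_left h2ineq (by positivity)
        _ = η * l * (1/5^n) := by ring
    linarith
  · push_neg at h14
    by_cases hex : ∃ t, (s₁ ≤ t ∧ t < 2*s₁) ∧ f t < η * l * t^n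
    · obtain ⟨s, ⟨hss1, hss2⟩, hfs⟩ := hex
      have hs0 : 0 < s := lt_of_lt_of_le hs₁pos hss1
      have hs12 : s < 1/2 := by linarith
      have hs1le : s ≤ 1 := by linarith
      have hhalf : s/2 < s₁ := by linarith
      have hfl : η * l * (s/2)^n ≤ f (s/2) := hlow _ (by linarith) hhalf
      have hb1 : ENNReal.ofReal (η * l * (s/2)^n) ≤ μ (Metric.ball x (s/2)) := by
        rw [← ENNReal.ofReal_toReal (measure_ne_top μ (Metric.ball x (s/2)))]
        exact ENNReal.ofReal_le_ofReal hfl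
      have hb2 : μ (Metric.ball x s) ≤ ENNReal.ofReal (η * l * s^n) := by
        rw [← ENNReal.ofReal_toReal (measure_ne_top μ (Metric.ball x s))]
        exact ENNReal.ofReal_le_ofReal hfs.le
      have hb3 : (∫⁻ y in Metric.ball x s, ENNReal.ofReal (R y) ^ (((n:ℝ)-1)/2) ∂μ)
          ≤ ENNReal.ofReal (c * l * s) :=
        le_trans le_add_self (hcon s ⟨hs0, hs12.le⟩).le
      have hSob := hsob s ⟨hs0, hs1le⟩
      -- measurability of the cutoff
      have hvmeas : Measurable fun y => ENNReal.ofReal (max (s - dist x y) 0) :=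
        ((continuous_const.sub (continuous_const.dist continuous_id)).max
          continuous_const).measurable.ennreal_ofReal
      have hp'0 : (0:ℝ) ≤ (2*(n:ℝ))/((n:ℝ)-2) := by
        apply div_nonneg <;> linarith
      have hθ0 : (0:ℝ) ≤ ((n:ℝ)-2)/(n:ℝ) := by apply div_nonneg <;> linarith
      -- lower bound for the Sobolev LHS
      have h1 : ENNReal.ofReal (s/2) ^ ((2*(n:ℝ))/((n:ℝ)-2)) * μ (Metric.ball x (s/2))
          ≤ ∫⁻ y, ENNReal.ofReal (max (s - dist x y) 0) ^ ((2*(n:ℝ))/((n:ℝ)-2)) ∂μ := by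
        rw [← setLIntegral_const (Metric.ball x (s/2))
            (ENNReal.ofReal (s/2) ^ ((2*(n:ℝ))/((n:ℝ)-2)))]
        refine le_trans (setLIntegral_mono (hvmeas.pow_const _) ?_)
          (setLIntegral_le_lintegral _ _)
        intro y hy
        refine ENNReal.rpow_le_rpow (ENNReal.ofReal_le_ofReal ?_) hp'0
        have hd : dist y x < s/2 := mem_ball.mp hy
        rw [dist_comm] at hd
        exact le_max_of_le_left (by linarith)
      have hE1 : ENNReal.ofReal ((η * l * (s/2)^n) ^ (((n:ℝ)-2)/(n:ℝ)) * ((s/2)^2))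
          ≤ (∫⁻ y, ENNReal.ofReal (max (s - dist x y) 0) ^ ((2*(n:ℝ))/((n:ℝ)-2)) ∂μ)
            ^ (((n:ℝ)-2)/(n:ℝ)) := by
        have h2 := ENNReal.rpow_le_rpow h1 hθ0
        rw [ENNReal.mul_rpow_of_nonneg _ _ hθ0, ← ENNReal.rpow_mul] at h2
        have hexp : (2*(n:ℝ))/((n:ℝ)-2) * (((n:ℝ)-2)/(n:ℝ)) = 2 := by
          have hne1 : (n:ℝ) - 2 ≠ 0 := by intro h; rw [sub_eq_zero] at h; linarith
          have hne2 : (n:ℝ) ≠ 0 := by linarith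
          field_simp
        rw [hexp] at h2
        refine le_trans ?_ h2
        rw [ENNReal.ofReal_mul (by positivity)]
        have e1 : ENNReal.ofReal ((η*l*(s/2)^n) ^ (((n:ℝ)-2)/(n:ℝ)))
            = ENNReal.ofReal (η*l*(s/2)^n) ^ (((n:ℝ)-2)/(n:ℝ)) :=
          (ENNReal.ofReal_rpow_of_pos (by positivity)).symm
        have e2 : ENNReal.ofReal (((s/2):ℝ)^2) = ENNReal.ofReal (s/2) ^ (2:ℝ) := by
          rw [ENNReal.ofReal_rpow_of_pos (by positivity)]
          congr 1
          rw [← Real.rpow_natCast (s/2) 2]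
          norm_num
        rw [e1, e2, mul_comm]
        exact mul_le_mul_right (ENNReal.rpow_le_rpow hb1 hθ0) _
      -- vanishing / upper bounds for the cutoff
      have hzero : ∀ y, y ∉ Metric.ball x s → ENNReal.ofReal (max (s - dist x y) 0) = 0 := by
        intro y hy
        rw [mem_ball, not_lt] at hy
        rw [dist_comm] at hy
        rw [max_eq_right (by linarith), ENNReal.ofReal_zero]
      have hub : ∀ y, ENNReal.ofReal (max (s - dist x y) 0) ≤ ENNReal.ofReal s := by
        intro y
        apply ENNReal.ofReal_le_ofReal
        exact max_le (by linarith [dist_nonneg (x := x) (y := y)]) hs0.le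
      -- upper bound for the curvature term
      set Y1 : ℝ := η * l * s^n with hY1def
      have hY1pos : 0 < Y1 := by positivity
      set i : ℝ := 2/((n:ℝ)-1) with hidef
      have hi0 : (0:ℝ) ≤ i := by
        rw [hidef]; apply div_nonneg (by norm_num); linarith
      have hi1 : (0:ℝ) ≤ 1 - i := by
        rw [hidef, sub_nonneg, div_le_one (by linarith)]; linarith
      set Y2 : ℝ := (c * l * s) ^ i * Y1 ^ (1 - i) with hY2def
      have hY2pos : 0 < Y2 := by
        rw [hY2def]; positivity
      have hq2 : 1/(((n:ℝ)-1)/2) = i := by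
        rw [hidef, one_div_div]
      have hI2 : (∫⁻ y in Metric.ball x s, ENNReal.ofReal (R y) ∂μ)
          ≤ ENNReal.ofReal (c*l*s) ^ i * ENNReal.ofReal Y1 ^ (1 - i) := by
        have hI := lintegral_le_rpow_mul (μ.restrict (Metric.ball x s))
          (hR.ennreal_ofReal) (q_ge_one hn)
        rw [Measure.restrict_apply_univ, hq2] at hI
        refine le_trans hI (mul_le_mul' ?_ ?_)
        · exact ENNReal.rpow_le_rpow hb3 hi0
        · exact ENNReal.rpow_le_rpow hb2 hi1
      have hW : (∫⁻ y, ENNReal.ofReal (R y)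
            * ENNReal.ofReal (max (s - dist x y) 0) ^ (2:ℝ) ∂μ)
          ≤ ENNReal.ofReal (s^2 * Y2) := by
        have hW0 : (∫⁻ y, ENNReal.ofReal (R y)
              * ENNReal.ofReal (max (s - dist x y) 0) ^ (2:ℝ) ∂μ)
            ≤ ENNReal.ofReal s ^ (2:ℝ)
              * ∫⁻ y in Metric.ball x s, ENNReal.ofReal (R y) ∂μ := by
          rw [← lintegral_const_mul _ hR.ennreal_ofReal,
            ← lintegral_indicator measurableSet_ball]
          apply lintegral_mono
          intro y
          dsimp only
          by_cases hy : y ∈ Metric.ball x s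
          · rw [Set.indicator_of_mem hy]
            rw [mul_comm]
            exact mul_le_mul_left
              (ENNReal.rpow_le_rpow (hub y) (by norm_num : (0:ℝ) ≤ 2)) _
          · rw [Set.indicator_of_notMem hy, hzero y hy,
              ENNReal.zero_rpow_of_pos (by norm_num : (0:ℝ) < 2), mul_zero]
        have h7 : s ^ (2:ℝ) = s^2 := by
          rw [← Real.rpow_natCast s 2]; norm_num
        refine le_trans hW0 (le_trans (mul_le_mul_right hI2 _) (le_of_eq ?_))
        rw [ENNReal.ofReal_rpow_of_pos hs0, h7,
          ENNReal.ofReal_rpow_of_pos (mul_pos (mul_pos hcpos hl) hs0),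
          ENNReal.ofReal_rpow_of_pos hY1pos,
          ← ENNReal.ofReal_mul (Real.rpow_nonneg
            (mul_nonneg (mul_nonneg hcpos.le hl.le) hs0.le) _),
          ← ENNReal.ofReal_mul (pow_nonneg hs0.le 2), hY2def]
      have hV2 : (∫⁻ y, ENNReal.ofReal (max (s - dist x y) 0) ^ (2:ℝ) ∂μ)
          ≤ ENNReal.ofReal (s^2 * Y1) := by
        have hV0 : (∫⁻ y, ENNReal.ofReal (max (s - dist x y) 0) ^ (2:ℝ) ∂μ)
            ≤ ENNReal.ofReal s ^ (2:ℝ) * μ (Metric.ball x s) := by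
          rw [← setLIntegral_const (Metric.ball x s) (ENNReal.ofReal s ^ (2:ℝ)),
            ← lintegral_indicator measurableSet_ball]
          apply lintegral_mono
          intro y
          dsimp only
          by_cases hy : y ∈ Metric.ball x s
          · rw [Set.indicator_of_mem hy]
            exact ENNReal.rpow_le_rpow (hub y) (by norm_num : (0:ℝ) ≤ 2)
          · rw [Set.indicator_of_notMem hy, hzero y hy,
              ENNReal.zero_rpow_of_pos (by norm_num : (0:ℝ) < 2)]
        have h7 : s ^ (2:ℝ) = s^2 := by
          rw [← Real.rpow_natCast s 2]; norm_num
        refine le_trans hV0 (le_trans (mul_le_mul_right hb2 _) (le_of_eq ?_))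
        rw [ENNReal.ofReal_rpow_of_pos hs0, h7,
          ← ENNReal.ofReal_mul (pow_nonneg hs0.le 2)]
      -- assemble the RHS bound
      have hE2 : ENNReal.ofReal A * (4 * μ (Metric.ball x s)
            + ∫⁻ y, ENNReal.ofReal (R y)
                * ENNReal.ofReal (max (s - dist x y) 0) ^ (2:ℝ) ∂μ)
          + ENNReal.ofReal B * ∫⁻ y, ENNReal.ofReal (max (s - dist x y) 0) ^ (2:ℝ) ∂μ
          ≤ ENNReal.ofReal (A * (4*Y1 + s^2*Y2) + B * (s^2*Y1)) := by
        rw [ENNReal.ofReal_add (by positivity) (by positivity)]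
        apply add_le_add
        · rw [ENNReal.ofReal_mul hA.le]
          apply mul_le_mul_right
          rw [ENNReal.ofReal_add (by positivity) (by positivity)]
          apply add_le_add
          · have h4 : (4:ℝ≥0∞) * μ (Metric.ball x s) ≤ 4 * ENNReal.ofReal Y1 :=
              mul_le_mul_right hb2 _
            refine le_trans h4 (le_of_eq ?_)
            rw [ENNReal.ofReal_mul (by norm_num : (0:ℝ) ≤ 4)]
            congr 1
            exact (ENNReal.ofReal_ofNat 4).symm
          · exact hW
        · rw [ENNReal.ofReal_mul hB]
          exact mul_le_mul_right hV2 _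
      -- combine and conclude via the core contradiction
      have hfin := le_trans hE1 (le_trans hSob hE2)
      have hs2nn : (0:ℝ) ≤ s^2 := pow_nonneg hs0.le 2
      have hYnn : (0:ℝ) ≤ A * (4*Y1 + s^2*Y2) + B * (s^2*Y1) :=
        add_nonneg (mul_nonneg hA.le (add_nonneg (by linarith)
          (mul_nonneg hs2nn hY2pos.le))) (mul_nonneg hB (mul_nonneg hs2nn hY1pos.le))
      have hfin' : (η * l * (s/2)^n) ^ (((n:ℝ)-2)/(n:ℝ)) * ((s/2)^2)
          ≤ A * (4*Y1 + s^2*Y2) + B * (s^2*Y1) :=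
        (ENNReal.ofReal_le_ofReal_iff hYnn).mp hfin
      exact core_contra n hn A B s hA hB hs0 hs1le hfin'
    · push_neg at hex
      have hmem : (3/2) * s₁ ∈ S := by
        refine ⟨⟨by linarith, by linarith⟩, ?_⟩
        intro t ht
        rcases lt_or_ge t s₁ with h | h
        · exact hlow t ht.1 h
        · exact hex t ⟨h, by linarith [ht.2]⟩
      have := le_csSup hSbdd hmem
      linarith

end DiamProof

set_option maxHeartbeats 1000000 in
open DiamProof in
/-- Diameter upper bound: there is `C₀ = C₀(n) > 0` such that for any compact metric
measure space satisfying the density, continuity, geodesic and Sobolev assumptions,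
`diam(X) ≤ C₀ (A+B+1)^{n/2} (1 + μ(X) + ∫ R^{(n-1)/2})`. -/
theorem diameter_upper_bound (n : ℕ) (hn : 3 ≤ n) :
    ∃ C₀ : ℝ, 0 < C₀ ∧
      ∀ (X : Type) [MetricSpace X] [CompactSpace X] [MeasurableSpace X] [BorelSpace X]
        (μ : Measure X) [IsFiniteMeasure μ] (A B : ℝ) (R : X → ℝ),
        (∀ x : X, Tendsto (fun ρ : ℝ => (μ (Metric.ball x ρ)).toReal / ρ ^ n)
            (nhdsWithin 0 (Set.Ioi 0)) (nhds (unitBallVol n))) →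
        (∀ x : X, ContinuousOn (fun ρ : ℝ => (μ (Metric.ball x ρ)).toReal)
            (Set.Ioi (0 : ℝ))) →
        (∀ a b : X, ∃ γ : ℝ → X, γ 0 = a ∧ γ (dist a b) = b ∧
            ∀ s ∈ Set.Icc (0 : ℝ) (dist a b), ∀ t ∈ Set.Icc (0 : ℝ) (dist a b),
              dist (γ s) (γ t) = |s - t|) →
        0 < A → 0 ≤ B → Measurable R → (∀ y, 0 ≤ R y) →
        (∀ x : X, SobolevAt μ n A B R x 1) →
        ENNReal.ofReal (Metric.diam (Set.univ : Set X))
          ≤ ENNReal.ofReal (C₀ * (A + B + 1) ^ ((n : ℝ) / 2)) *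
              (1 + μ Set.univ
                + ∫⁻ y, ENNReal.ofReal (R y) ^ (((n : ℝ) - 1) / 2) ∂μ) := by
  classical
  refine ⟨(8 / cc n) * ((2:ℝ)^(n+2)) ^ ((n:ℝ)/2),
    mul_pos (div_pos (by norm_num) (cc_pos n))
      (Real.rpow_pos_of_pos (by positivity) _), ?_⟩
  intro X _ _ _ _ μ _ A B R hdens hcont hgeo hA hB hR hR0 hsob
  have hcpos := cc_pos n
  have hl := lam_pos n hA hB
  -- coefficient identity
  have hKid : (8 / cc n) * ((2:ℝ)^(n+2)) ^ ((n:ℝ)/2) * (A+B+1) ^ ((n:ℝ)/2)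
      = 8 / (cc n * lam n A B) := by
    rw [lam, Real.rpow_neg (by positivity),
      Real.mul_rpow (by positivity) (by positivity)]
    have h1 : (0:ℝ) < ((2:ℝ)^(n+2)) ^ ((n:ℝ)/2) := by positivity
    have h2 : (0:ℝ) < (A+B+1) ^ ((n:ℝ)/2) := by positivity
    have h3 : (0:ℝ) < cc n := cc_pos n
    field_simp
  set g : X → ℝ≥0∞ := fun y => ENNReal.ofReal (R y) ^ (((n:ℝ)-1)/2) with hgdef
  have hgmeas : Measurable g := hR.ennreal_ofReal.pow_const _
  set ν : Measure X := μ + μ.withDensity g with hνdef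
  have hνball : ∀ (z : X) (r : ℝ), ν (Metric.ball z r)
      = μ (Metric.ball z r) + ∫⁻ y in Metric.ball z r, g y ∂μ := by
    intro z r
    rw [hνdef, Measure.add_apply, withDensity_apply _ measurableSet_ball]
  have hνuniv : ν Set.univ = μ Set.univ + ∫⁻ y, g y ∂μ := by
    rw [hνdef, Measure.add_apply, withDensity_apply _ MeasurableSet.univ,
      Measure.restrict_univ]
  choose rad hrad1 hrad2 using fun z : X =>
    exists_good_radius μ n hn A B R hA hB hR z (hdens z) (hsob z)
  -- per-pair distance bound
  have key : ∀ a b : X, ENNReal.ofReal (dist a b)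
      ≤ ENNReal.ofReal (8 / (cc n * lam n A B)) * ν Set.univ := by
    intro a b
    obtain ⟨γ, hγ0, hγL, hγiso⟩ := hgeo a b
    set L := dist a b with hLdef
    obtain ⟨u, hu_sub, hu_disj, hu_cov⟩ :=
      Vitali.exists_disjoint_subfamily_covering_enlargement_closedBall
        (Set.Icc (0:ℝ) L) (fun t => t) (fun t => rad (γ t)) (1/2)
        (fun t _ => (hrad1 (γ t)).2) 4 (by norm_num)
    have hu_count : u.Countable := by
      have hdisj2 : u.PairwiseDisjoint (fun t => Metric.ball t (rad (γ t))) := by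
        intro p hp q hq hpq
        exact Set.disjoint_of_subset ball_subset_closedBall ball_subset_closedBall
          (hu_disj hp hq hpq)
      exact hdisj2.countable_of_isOpen (fun p _ => isOpen_ball)
        (fun p _ => nonempty_ball.mpr (hrad1 (γ p)).1)
    -- real-line ball disjointness gives separation
    have hsep : ∀ p ∈ u, ∀ q ∈ u, p ≠ q → rad (γ p) + rad (γ q) ≤ |p - q| := by
      intro p hp q hq hpq
      by_contra hlt
      push_neg at hlt
      have habs := abs_lt.mp hlt
      have hrp := (hrad1 (γ p)).1
      have hrq := (hrad1 (γ q)).1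
      refine absurd (hu_disj hp hq hpq) (Set.not_disjoint_iff.mpr
        ⟨max (p - rad (γ p)) (q - rad (γ q)), ?_, ?_⟩)
      · show max (p - rad (γ p)) (q - rad (γ q)) ∈ Metric.closedBall p (rad (γ p))
        rw [Real.closedBall_eq_Icc]
        refine ⟨le_max_left _ _, max_le (by linarith) (by linarith)⟩
      · show max (p - rad (γ p)) (q - rad (γ q)) ∈ Metric.closedBall q (rad (γ q))
        rw [Real.closedBall_eq_Icc]
        refine ⟨le_max_right _ _, max_le (by linarith) (by linarith)⟩
    -- disjointness of the corresponding balls in X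
    have hXdisj : u.PairwiseDisjoint (fun t => Metric.ball (γ t) (rad (γ t))) := by
      intro p hp q hq hpq
      have h3 : dist (γ p) (γ q) = |p - q| := hγiso p (hu_sub hp) q (hu_sub hq)
      rw [Function.onFun, Set.disjoint_left]
      intro y hyp hyq
      have h1 : dist y (γ p) < rad (γ p) := mem_ball.mp hyp
      have h2 : dist y (γ q) < rad (γ q) := mem_ball.mp hyq
      have h4 : dist (γ p) (γ q) ≤ dist y (γ p) + dist y (γ q) := by
        rw [dist_comm y (γ p)]
        exact dist_triangle _ _ _
      have h5 := hsep p hp q hq hpq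
      rw [h3] at h4
      linarith
    -- covering estimate on the line
    have hcov : Set.Icc (0:ℝ) L ⊆ ⋃ t ∈ u, Metric.closedBall t (4 * rad (γ t)) := by
      intro a' ha'
      obtain ⟨b', hb', hsub⟩ := hu_cov a' ha'
      exact Set.mem_biUnion hb' (hsub (mem_closedBall_self (hrad1 (γ a')).1.le))
    have hL1 : ENNReal.ofReal L ≤ ∑' t : u, ENNReal.ofReal (8 * rad (γ (t:ℝ))) := by
      calc ENNReal.ofReal L = volume (Set.Icc (0:ℝ) L) := by
            rw [Real.volume_Icc, sub_zero]
        _ ≤ volume (⋃ t ∈ u, Metric.closedBall t (4 * rad (γ t))) := measure_mono hcov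
        _ ≤ ∑' t : u, volume (Metric.closedBall (t:ℝ) (4 * rad (γ (t:ℝ)))) :=
            measure_biUnion_le volume hu_count _
        _ = ∑' t : u, ENNReal.ofReal (8 * rad (γ (t:ℝ))) := by
            congr 1
            funext t
            rw [Real.volume_closedBall]
            congr 1
            ring
    have hL2 : ∑' t : u, ENNReal.ofReal (8 * rad (γ (t:ℝ)))
        = ENNReal.ofReal (8/(cc n * lam n A B))
          * ∑' t : u, ENNReal.ofReal (cc n * lam n A B * rad (γ (t:ℝ))) := by
      rw [← ENNReal.tsum_mul_left]
      congr 1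
      funext t
      rw [← ENNReal.ofReal_mul (by positivity)]
      congr 1
      field_simp
    have hL3 : ∑' t : u, ENNReal.ofReal (cc n * lam n A B * rad (γ (t:ℝ)))
        ≤ ν Set.univ := by
      have hstep : ∑' t : u, ENNReal.ofReal (cc n * lam n A B * rad (γ (t:ℝ)))
          ≤ ∑' t : u, ν (Metric.ball (γ (t:ℝ)) (rad (γ (t:ℝ)))) := by
        apply ENNReal.tsum_le_tsum
        intro t
        rw [hνball]
        exact hrad2 (γ (t:ℝ))
      refine le_trans hstep ?_
      rw [← measure_biUnion hu_count hXdisj (fun t _ => measurableSet_ball)]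
      exact measure_mono (Set.subset_univ _)
    calc ENNReal.ofReal (dist a b) = ENNReal.ofReal L := rfl
      _ ≤ ∑' t : u, ENNReal.ofReal (8 * rad (γ (t:ℝ))) := hL1
      _ = ENNReal.ofReal (8/(cc n * lam n A B))
          * ∑' t : u, ENNReal.ofReal (cc n * lam n A B * rad (γ (t:ℝ))) := hL2
      _ ≤ ENNReal.ofReal (8/(cc n * lam n A B)) * ν Set.univ := mul_le_mul_right hL3 _
  -- conclude
  set T : ℝ≥0∞ := ENNReal.ofReal ((8 / cc n) * ((2:ℝ)^(n+2)) ^ ((n:ℝ)/2)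
      * (A + B + 1) ^ ((n : ℝ) / 2)) *
      (1 + μ Set.univ + ∫⁻ y, ENNReal.ofReal (R y) ^ (((n : ℝ) - 1) / 2) ∂μ) with hTdef
  have hν_le : ν Set.univ
      ≤ 1 + μ Set.univ + ∫⁻ y, ENNReal.ofReal (R y) ^ (((n : ℝ) - 1) / 2) ∂μ := by
    rw [hνuniv]
    calc μ Set.univ + ∫⁻ y, g y ∂μ
        ≤ 1 + (μ Set.univ + ∫⁻ y, g y ∂μ) := le_add_self
      _ = 1 + μ Set.univ + ∫⁻ y, ENNReal.ofReal (R y) ^ (((n : ℝ) - 1) / 2) ∂μ := by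
          rw [hgdef, add_assoc]
  have key2 : ∀ a b : X, ENNReal.ofReal (dist a b) ≤ T := by
    intro a b
    refine le_trans (key a b) ?_
    rw [hTdef, hKid]
    exact mul_le_mul_right hν_le _
  by_cases hT : T = ⊤
  · rw [hT]
    exact le_top
  · have hb : ∀ a b : X, dist a b ≤ T.toReal := by
      intro a b
      have h1 := key2 a b
      rw [← ENNReal.ofReal_toReal hT] at h1
      exact (ENNReal.ofReal_le_ofReal_iff ENNReal.toReal_nonneg).mp h1
    have hd : Metric.diam (Set.univ : Set X) ≤ T.toReal :=
      Metric.diam_le_of_forall_dist_le ENNReal.toReal_nonneg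
        (fun a _ b _ => hb a b)
    calc ENNReal.ofReal (Metric.diam (Set.univ : Set X))
        ≤ ENNReal.ofReal T.toReal := ENNReal.ofReal_le_ofReal hd
      _ = T := ENNReal.ofReal_toReal hT
end

section
/- There exists a constant C₀ > 0 depending only on the integer n ≥ 3 with the following property. Let (X,d) be a compact metric space equipped with a finite Borel measure μ such that: (i) for every x ∈ X, μ(B(x,ρ))/ρⁿ → ω_n as ρ → 0⁺; (ii) for every x ∈ X the function ρ ↦ μ(B(x,ρ)) is continuous on (0,∞); (iii) X is geodesic, i.e. for all a,b ∈ X there exists γ : [0, d(a,b)] → X with γ(0) = a, γ(d(a,b)) = b and d(γ(s), γ(t)) = |s − t| for all s,t ∈ [0, d(a,b)]; (iv) there are constants A > 0, B ≥ 0 and a measurable function R : X → [0,∞) such that the (A,B,R)-Sobolev inequality holds at every x ∈ X up to scale 1. Set κ₀ = min{(2ⁿ(48A + 4B))^{−n/2}, ω_n/2}. If diam(X) ≥ C₀ (1 + μ(X)/κ₀), then diam(X) ≤ C₀ κ₀^{−1} ∫_X R^{(n−1)/2} dμ. -/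
open MeasureTheory Metric Set Filter

lemma unitBallVol_pos (n : ℕ) : 0 < unitBallVol n := by
  have h1 : (0:ENNReal) < volume (Metric.ball (0 : EuclideanSpace ℝ (Fin n)) 1) :=
    measure_ball_pos _ _ one_pos
  exact ENNReal.toReal_pos h1.ne' measure_ball_lt_top.ne

lemma holder_aux {X : Type*} [MetricSpace X] [MeasurableSpace X] [BorelSpace X]
    (μ : Measure X) (n : ℕ) (hn : 3 ≤ n) (R : X → ℝ) (hR : Measurable R)
    {Bs : Set X} (hBs : MeasurableSet Bs) :
    ∫⁻ y in Bs, ENNReal.ofReal (R y) ∂μ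
      ≤ (∫⁻ y in Bs, ENNReal.ofReal (R y) ^ (((n:ℝ)-1)/2) ∂μ) ^ ((2:ℝ)/((n:ℝ)-1))
        * (μ Bs) ^ (((n:ℝ)-3)/((n:ℝ)-1)) := by
  rcases eq_or_lt_of_le hn with h3 | h4
  · -- n = 3
    have h3' : (n:ℝ) = 3 := by exact_mod_cast h3.symm
    rw [h3']
    norm_num
  · -- 4 ≤ n
    have hn4 : (4:ℝ) ≤ (n:ℝ) := by exact_mod_cast h4
    have hn1 : (0:ℝ) < (n:ℝ) - 1 := by linarith
    have hn3 : (0:ℝ) < (n:ℝ) - 3 := by linarith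
    have hpq : (((n:ℝ)-1)/2).HolderConjugate (((n:ℝ)-1)/((n:ℝ)-3)) := by
      refine ⟨?_, by positivity, by positivity⟩
      rw [inv_one]
      field_simp
      ring
    have h := ENNReal.lintegral_mul_le_Lp_mul_Lq (μ.restrict Bs) hpq
      (f := fun y => ENNReal.ofReal (R y)) (g := fun _ => (1:ENNReal))
      (hR.ennreal_ofReal.aemeasurable) aemeasurable_const
    simp only [Pi.mul_apply, mul_one, ENNReal.one_rpow, lintegral_one,
      Measure.restrict_apply MeasurableSet.univ, univ_inter] at h
    have e1 : 1/(((n:ℝ)-1)/2) = (2:ℝ)/((n:ℝ)-1) := by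
      field_simp
    have e2 : 1/(((n:ℝ)-1)/((n:ℝ)-3)) = ((n:ℝ)-3)/((n:ℝ)-1) := by
      field_simp
    rw [e1, e2] at h
    exact h

lemma real_gap {b c rb rc : ℝ} (hrb : 0 ≤ rb) (hrc : 0 ≤ rc)
    (h : Disjoint (Metric.closedBall b rb) (Metric.closedBall c rc)) :
    rb + rc < |b - c| := by
  by_contra hcon
  push_neg at hcon
  have key : ∀ b' c' rb' rc' : ℝ, 0 ≤ rb' → 0 ≤ rc' → b' ≤ c' → |b' - c'| ≤ rb' + rc' →
      ¬ Disjoint (Metric.closedBall b' rb') (Metric.closedBall c' rc') := by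
    intro b' c' rb' rc' h1 h2 h3 h4
    rw [Set.not_disjoint_iff]
    refine ⟨min (b' + rb') c', ?_, ?_⟩
    · rw [Metric.mem_closedBall, Real.dist_eq, abs_le]
      constructor
      · have : b' ≤ min (b' + rb') c' := le_min (by linarith) h3
        linarith
      · have := min_le_left (b' + rb') c'
        linarith
    · rw [Metric.mem_closedBall, Real.dist_eq, abs_le]
      have habs : c' - b' ≤ rb' + rc' := by
        rw [abs_sub_comm] at h4
        calc c' - b' ≤ |c' - b'| := le_abs_self _
        _ ≤ rb' + rc' := h4
      constructor
      · have : c' - rc' ≤ min (b' + rb') c' := le_min (by linarith) (by linarith)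
        linarith
      · have := min_le_right (b' + rb') c'
        linarith
  rcases le_total b c with hbc | hbc
  · exact key b c rb rc hrb hrc hbc hcon h
  · refine key c b rc rb hrc hrb hbc ?_ h.symm
    · rw [abs_sub_comm] at hcon; linarith

set_option maxHeartbeats 2000000 in
lemma dichotomy {X : Type*} [MetricSpace X] [MeasurableSpace X] [BorelSpace X]
    (μ : Measure X) [IsFiniteMeasure μ] (n : ℕ) (hn : 3 ≤ n)
    (A B : ℝ) (R : X → ℝ) (κ : ℝ)
    (hdens : ∀ x : X, Tendsto (fun ρ : ℝ => (μ (Metric.ball x ρ)).toReal / ρ ^ n)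
        (nhdsWithin 0 (Set.Ioi 0)) (nhds (unitBallVol n)))
    (hcont : ∀ x : X, ContinuousOn (fun ρ : ℝ => (μ (Metric.ball x ρ)).toReal)
        (Set.Ioi (0:ℝ)))
    (hA : 0 < A) (hB : 0 ≤ B) (hR : Measurable R) (hR0 : ∀ y, 0 ≤ R y)
    (hSob : ∀ x : X, SobolevAt μ n A B R x 1)
    (hκpos : 0 < κ)
    (hκ1 : κ ≤ (2 ^ n * (48 * A + 4 * B)) ^ (-(n : ℝ) / 2))
    (hκ2 : κ ≤ unitBallVol n / 2) (x : X) :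
    ∃ r ∈ Set.Ioc (0:ℝ) 1,
      ENNReal.ofReal (κ * r) ≤ μ (Metric.ball x r)
        + ∫⁻ y in Metric.ball x r, ENNReal.ofReal (R y) ^ (((n:ℝ)-1)/2) ∂μ := by
  have hn3 : (3:ℝ) ≤ (n:ℝ) := by exact_mod_cast hn
  have hnpos : (0:ℝ) < (n:ℝ) := by linarith
  have hn2 : (0:ℝ) < (n:ℝ) - 2 := by linarith
  have hn1 : (0:ℝ) < (n:ℝ) - 1 := by linarith
  -- the key consequence of the smallness of κ
  have hcpos : (0:ℝ) < 2 ^ n * (48 * A + 4 * B) := by positivity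
  have hκA : κ ^ ((2:ℝ)/(n:ℝ)) ≤ (2 ^ n * (48 * A + 4 * B))⁻¹ := by
    calc κ ^ ((2:ℝ)/(n:ℝ))
        ≤ ((2 ^ n * (48 * A + 4 * B)) ^ (-(n : ℝ) / 2)) ^ ((2:ℝ)/(n:ℝ)) :=
          Real.rpow_le_rpow hκpos.le hκ1 (by positivity)
      _ = (2 ^ n * (48 * A + 4 * B)) ^ ((-(n : ℝ) / 2) * ((2:ℝ)/(n:ℝ))) :=
          (Real.rpow_mul hcpos.le _ _).symm
      _ = (2 ^ n * (48 * A + 4 * B)) ^ (-1:ℝ) := by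
          congr 1
          field_simp
      _ = (2 ^ n * (48 * A + 4 * B))⁻¹ := Real.rpow_neg_one _
  by_cases hgood : ENNReal.ofReal κ ≤ μ (Metric.ball x 1)
  · refine ⟨1, ⟨one_pos, le_refl 1⟩, ?_⟩
    rw [mul_one]
    exact le_add_right hgood
  push_neg at hgood
  set V : ℝ → ℝ := fun ρ => (μ (Metric.ball x ρ)).toReal with hVdef
  set f : ℝ → ℝ := fun ρ => V ρ / ρ ^ n with hfdef
  have hfc : ContinuousOn f (Ioi 0) :=
    (hcont x).div (continuousOn_pow n) (fun ρ hρ => pow_ne_zero n (ne_of_gt hρ))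
  have hκω : κ < unitBallVol n := lt_of_le_of_lt hκ2 (by linarith [unitBallVol_pos n])
  have hev : ∀ᶠ s in nhdsWithin 0 (Set.Ioi 0), κ < f s :=
    (hdens x).eventually (eventually_gt_nhds hκω)
  rw [eventually_nhdsWithin_iff, Metric.eventually_nhds_iff] at hev
  obtain ⟨δ, hδpos, hδ⟩ := hev
  have hδ' : ∀ s : ℝ, 0 < s → s < δ → κ < f s := by
    intro s hs1 hs2
    refine hδ ?_ hs1
    rw [Real.dist_eq, sub_zero, abs_of_pos hs1]
    exact hs2
  set δ₀ : ℝ := min δ 1 with hδ₀def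
  have hδ₀pos : 0 < δ₀ := lt_min hδpos one_pos
  have hf1 : f 1 ≤ κ := by
    have : V 1 < κ := ENNReal.toReal_lt_of_lt_ofReal hgood
    simpa [hfdef] using this.le
  set S : Set ℝ := Icc δ₀ 1 ∩ f ⁻¹' (Iic κ) with hSdef
  have hSne : (1:ℝ) ∈ S := ⟨⟨min_le_right _ _, le_refl 1⟩, hf1⟩
  have hScl : IsClosed S := by
    refine ContinuousOn.preimage_isClosed_of_isClosed ?_ isClosed_Icc isClosed_Iic
    exact hfc.mono (fun s hs => lt_of_lt_of_le hδ₀pos hs.1)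
  set s₀ : ℝ := sInf S with hs₀def
  have hbdd : BddBelow S := ⟨δ₀, fun s hs => hs.1.1⟩
  have hs₀S : s₀ ∈ S := hScl.csInf_mem ⟨1, hSne⟩ hbdd
  have hs₀pos : 0 < s₀ := lt_of_lt_of_le hδ₀pos hs₀S.1.1
  have hs₀le1 : s₀ ≤ 1 := hs₀S.1.2
  have hupper : μ (Metric.ball x s₀) ≤ ENNReal.ofReal (κ * s₀ ^ n) := by
    have h1 : V s₀ / s₀ ^ n ≤ κ := hs₀S.2
    have h2 : V s₀ ≤ κ * s₀ ^ n := by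
      rw [div_le_iff₀ (by positivity)] at h1
      linarith
    exact (ENNReal.le_ofReal_iff_toReal_le (measure_ne_top μ _) (by positivity)).mpr h2
  have hlower : ∀ s : ℝ, 0 < s → s < s₀ → ENNReal.ofReal (κ * s ^ n) ≤ μ (Metric.ball x s) := by
    intro s hs hss
    have hfs : κ < f s := by
      rcases lt_or_ge s δ₀ with h | h
      · exact hδ' s hs (lt_of_lt_of_le h (min_le_left _ _))
      · by_contra hcon
        push_neg at hcon
        have : s ∈ S := ⟨⟨h, le_trans hss.le hs₀le1⟩, hcon⟩
        have := csInf_le hbdd this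
        linarith [hss]
    have : κ * s ^ n < V s := by
      rw [hfdef] at hfs
      have := (lt_div_iff₀ (by positivity : (0:ℝ) < s ^ n)).mp hfs
      linarith
    exact ENNReal.ofReal_le_of_le_toReal this.le
  -- Apply the Sobolev inequality at scale s₀
  have hsob := hSob x s₀ ⟨hs₀pos, hs₀le1⟩
  set g : X → ENNReal := fun y => ENNReal.ofReal (max (s₀ - dist x y) 0) with hgdef
  set q : ℝ := (2 * (n : ℝ)) / ((n : ℝ) - 2) with hqdef
  set e : ℝ := ((n : ℝ) - 2) / (n : ℝ) with hedef
  have hqpos : 0 < q := by positivity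
  have hepos : 0 < e := by positivity
  set K : ℝ := κ ^ (((n:ℝ)-2)/(n:ℝ)) with hKdef
  have hKpos : 0 < K := Real.rpow_pos_of_pos hκpos _
  have hhalf : 0 < s₀/2 := by linarith
  -- dist symmetry helper
  have hdist : ∀ y : X, dist x y = dist y x := fun y => dist_comm x y
  -- LHS lower bound
  have lhs_lb : ENNReal.ofReal (K * (s₀/2)^n) ≤ (∫⁻ y, g y ^ q ∂μ) ^ e := by
    have hptwise : ∀ y, (Metric.ball x (s₀/2)).indicator
        (fun _ => ENNReal.ofReal ((s₀/2) ^ q)) y ≤ g y ^ q := by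
      intro y
      by_cases hy : y ∈ Metric.ball x (s₀/2)
      · rw [Set.indicator_of_mem hy]
        have hdy : dist x y < s₀/2 := by rw [hdist y]; exact Metric.mem_ball.mp hy
        have h1 : ENNReal.ofReal ((s₀/2) ^ q) = ENNReal.ofReal (s₀/2) ^ q :=
          (ENNReal.ofReal_rpow_of_pos hhalf).symm
        rw [h1]
        refine ENNReal.rpow_le_rpow ?_ hqpos.le
        apply ENNReal.ofReal_le_ofReal
        have : s₀/2 ≤ s₀ - dist x y := by linarith
        exact le_max_of_le_left this
      · rw [Set.indicator_of_notMem hy]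
        exact zero_le
    have h1 : ENNReal.ofReal ((s₀/2) ^ q) * μ (Metric.ball x (s₀/2)) ≤ ∫⁻ y, g y ^ q ∂μ := by
      calc ENNReal.ofReal ((s₀/2) ^ q) * μ (Metric.ball x (s₀/2))
          = ∫⁻ y, (Metric.ball x (s₀/2)).indicator
              (fun _ => ENNReal.ofReal ((s₀/2) ^ q)) y ∂μ :=
            (lintegral_indicator_const measurableSet_ball _).symm
        _ ≤ ∫⁻ y, g y ^ q ∂μ := lintegral_mono hptwise
    have h2 : ENNReal.ofReal (κ * (s₀/2)^n) ≤ μ (Metric.ball x (s₀/2)) :=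
      hlower _ hhalf (by linarith)
    have hreal : ((s₀/2) ^ q * (κ * (s₀/2)^n)) ^ e = K * (s₀/2)^n := by
      have hb : (0:ℝ) < (s₀/2) ^ q := Real.rpow_pos_of_pos hhalf _
      rw [Real.mul_rpow (by positivity) (by positivity),
          Real.mul_rpow hκpos.le (by positivity),
          ← Real.rpow_natCast (s₀/2) n,
          ← Real.rpow_mul hhalf.le, ← Real.rpow_mul hhalf.le]
      have e1 : q * e = 2 := by
        rw [hqdef, hedef]; field_simp
      have e2 : (n:ℝ) * e = (n:ℝ) - 2 := by
        rw [hedef]; field_simp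
      rw [e1, e2, ← hKdef]
      have e3 : (s₀/2) ^ (2:ℝ) * (s₀/2) ^ ((n:ℝ)-2) = (s₀/2) ^ ((n:ℝ)) := by
        rw [← Real.rpow_add hhalf]; norm_num
      rw [← e3]; ring
    calc ENNReal.ofReal (K * (s₀/2)^n)
        = (ENNReal.ofReal ((s₀/2) ^ q) * ENNReal.ofReal (κ * (s₀/2)^n)) ^ e := by
          rw [← ENNReal.ofReal_mul (by positivity), ENNReal.ofReal_rpow_of_pos (by positivity), hreal]
      _ ≤ (ENNReal.ofReal ((s₀/2) ^ q) * μ (Metric.ball x (s₀/2))) ^ e :=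
          ENNReal.rpow_le_rpow (mul_le_mul_right h2 _) hepos.le
      _ ≤ (∫⁻ y, g y ^ q ∂μ) ^ e := ENNReal.rpow_le_rpow h1 hepos.le
  -- vanishing of the cutoff outside the ball, and bound inside
  have hgzero : ∀ y : X, y ∉ Metric.ball x s₀ → g y = 0 := by
    intro y hy
    have hdy : s₀ ≤ dist x y := by
      rw [hdist y]; exact le_of_not_gt (fun h => hy (Metric.mem_ball.mpr h))
    simp only [hgdef]
    rw [max_eq_right (by linarith)]
    exact ENNReal.ofReal_zero
  have hgle : ∀ y : X, g y ^ (2:ℝ) ≤ ENNReal.ofReal (s₀^2) := by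
    intro y
    calc g y ^ (2:ℝ) ≤ ENNReal.ofReal s₀ ^ (2:ℝ) := by
          refine ENNReal.rpow_le_rpow (ENNReal.ofReal_le_ofReal ?_) (by norm_num)
          exact max_le (by linarith [dist_nonneg (x := x) (y := y)]) hs₀pos.le
      _ = ENNReal.ofReal (s₀ ^ (2:ℝ)) := ENNReal.ofReal_rpow_of_pos hs₀pos
      _ = ENNReal.ofReal (s₀ ^ 2) := by rw [Real.rpow_two]
  set I : ENNReal := ∫⁻ y in Metric.ball x s₀, ENNReal.ofReal (R y) ∂μ with hIdef
  have I2 : ∫⁻ y, ENNReal.ofReal (R y) * g y ^ (2:ℝ) ∂μ ≤ ENNReal.ofReal (s₀^2) * I := by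
    rw [hIdef, ← lintegral_indicator measurableSet_ball, ← lintegral_const_mul _
      ((hR.ennreal_ofReal).indicator measurableSet_ball)]
    refine lintegral_mono (fun y => ?_)
    by_cases hy : y ∈ Metric.ball x s₀
    · rw [Set.indicator_of_mem hy]
      calc ENNReal.ofReal (R y) * g y ^ (2:ℝ)
          ≤ ENNReal.ofReal (R y) * ENNReal.ofReal (s₀^2) := mul_le_mul_right (hgle y) _
        _ = ENNReal.ofReal (s₀^2) * ENNReal.ofReal (R y) := mul_comm _ _
    · rw [Set.indicator_of_notMem hy, hgzero y hy]
      rw [ENNReal.zero_rpow_of_pos (by norm_num)]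
      simp
  have I3 : ∫⁻ y, g y ^ (2:ℝ) ∂μ ≤ ENNReal.ofReal (s₀^2) * μ (Metric.ball x s₀) := by
    rw [← lintegral_indicator_const measurableSet_ball]
    refine lintegral_mono (fun y => ?_)
    by_cases hy : y ∈ Metric.ball x s₀
    · rw [Set.indicator_of_mem hy]; exact hgle y
    · rw [Set.indicator_of_notMem hy, hgzero y hy]
      rw [ENNReal.zero_rpow_of_pos (by norm_num)]
  -- combine into the main inequality
  have hmain : ENNReal.ofReal (K * (s₀/2)^n)
      ≤ ENNReal.ofReal ((4*A+B)*(κ*s₀^n)) + ENNReal.ofReal (A*s₀^2) * I := by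
    refine le_trans (le_trans lhs_lb hsob) ?_
    have hb1 : μ (Metric.ball x s₀) ≤ ENNReal.ofReal (κ*s₀^n) := by
      refine le_trans hupper (le_of_eq ?_)
      norm_cast
    have c1 : ENNReal.ofReal A * (4 * μ (Metric.ball x s₀)
          + ∫⁻ y, ENNReal.ofReal (R y) * g y ^ (2:ℝ) ∂μ)
        ≤ ENNReal.ofReal (4*A*(κ*s₀^n)) + ENNReal.ofReal (A*s₀^2) * I := by
      rw [mul_add]
      refine add_le_add ?_ ?_
      · calc ENNReal.ofReal A * (4 * μ (Metric.ball x s₀))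
            ≤ ENNReal.ofReal A * (4 * ENNReal.ofReal (κ*s₀^n)) := by
              exact mul_le_mul_right (mul_le_mul_right hb1 _) _
          _ = ENNReal.ofReal (4*A*(κ*s₀^n)) := by
              rw [← ENNReal.ofReal_ofNat, ← ENNReal.ofReal_mul (by norm_num),
                ← ENNReal.ofReal_mul (by positivity)]
              ring_nf
      · calc ENNReal.ofReal A * ∫⁻ y, ENNReal.ofReal (R y) * g y ^ (2:ℝ) ∂μ
            ≤ ENNReal.ofReal A * (ENNReal.ofReal (s₀^2) * I) := mul_le_mul_right I2 _
          _ = ENNReal.ofReal (A*s₀^2) * I := by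
              rw [← mul_assoc, ← ENNReal.ofReal_mul hA.le]
    have c2 : ENNReal.ofReal B * ∫⁻ y, g y ^ (2:ℝ) ∂μ
        ≤ ENNReal.ofReal (B*(κ*s₀^n)) := by
      calc ENNReal.ofReal B * ∫⁻ y, g y ^ (2:ℝ) ∂μ
          ≤ ENNReal.ofReal B * (ENNReal.ofReal (s₀^2) * ENNReal.ofReal (κ*s₀^n)) :=
            mul_le_mul_right (le_trans I3 (mul_le_mul_right hb1 _)) _
        _ = ENNReal.ofReal (B*(s₀^2*(κ*s₀^n))) := by
            rw [← ENNReal.ofReal_mul (by positivity), ← ENNReal.ofReal_mul hB]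
        _ ≤ ENNReal.ofReal (B*(κ*s₀^n)) := by
            refine ENNReal.ofReal_le_ofReal ?_
            have hs₀sq : s₀^2 ≤ 1 := by nlinarith
            have hpos : (0:ℝ) ≤ κ*s₀^n := by positivity
            nlinarith [mul_nonneg hB hpos]
    calc ENNReal.ofReal A * (4 * μ (Metric.ball x s₀)
          + ∫⁻ y, ENNReal.ofReal (R y) * g y ^ (2:ℝ) ∂μ)
        + ENNReal.ofReal B * ∫⁻ y, g y ^ (2:ℝ) ∂μ
        ≤ (ENNReal.ofReal (4*A*(κ*s₀^n)) + ENNReal.ofReal (A*s₀^2) * I)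
          + ENNReal.ofReal (B*(κ*s₀^n)) := add_le_add c1 c2
      _ = ENNReal.ofReal ((4*A+B)*(κ*s₀^n)) + ENNReal.ofReal (A*s₀^2) * I := by
          rw [add_right_comm, ← ENNReal.ofReal_add (by positivity) (by positivity)]
          ring_nf
  -- the bad term is at most a quarter of the main term
  have hκK : κ = K * κ ^ ((2:ℝ)/(n:ℝ)) := by
    rw [hKdef, ← Real.rpow_add hκpos]
    rw [show ((n:ℝ)-2)/(n:ℝ) + (2:ℝ)/(n:ℝ) = 1 by field_simp; ring, Real.rpow_one]
  have h2n : (0:ℝ) < 2^n := by positivity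
  have hAκn : A * κ ^ ((2:ℝ)/(n:ℝ)) ≤ 1/(2^n*48) := by
    calc A * κ ^ ((2:ℝ)/(n:ℝ)) ≤ A * (2 ^ n * (48 * A + 4 * B))⁻¹ :=
          mul_le_mul_of_nonneg_left hκA hA.le
      _ = A / (2 ^ n * (48 * A + 4 * B)) := by rw [div_eq_mul_inv]
      _ ≤ 1/(2^n*48) := by
          rw [div_le_div_iff₀ hcpos (by positivity)]
          nlinarith [mul_nonneg hB h2n.le, mul_nonneg hA.le h2n.le]
  have hABκ : (4*A+B) * κ ^ ((2:ℝ)/(n:ℝ)) ≤ 1/(2^n*4) := by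
    calc (4*A+B) * κ ^ ((2:ℝ)/(n:ℝ)) ≤ (4*A+B) * (2 ^ n * (48 * A + 4 * B))⁻¹ :=
          mul_le_mul_of_nonneg_left hκA (by linarith)
      _ = (4*A+B) / (2 ^ n * (48 * A + 4 * B)) := by rw [div_eq_mul_inv]
      _ ≤ 1/(2^n*4) := by
          rw [div_le_div_iff₀ hcpos (by positivity)]
          nlinarith [mul_nonneg hB h2n.le, mul_nonneg hA.le h2n.le]
  have hreal_bad : (4*A+B)*(κ*s₀^n) ≤ (K * (s₀/2)^n)/4 := by
    have h1 : (4*A+B)*(κ*s₀^n) = ((4*A+B)*κ^((2:ℝ)/(n:ℝ))) * (K*s₀^n) := by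
      conv_lhs => rw [hκK]
      ring
    rw [h1]
    have h2 : (K*(s₀/2)^n)/4 = (1/(2^n*4)) * (K*s₀^n) := by
      rw [div_pow]
      field_simp
    rw [h2]
    exact mul_le_mul_of_nonneg_right hABκ (by positivity)
  have step2 : ENNReal.ofReal ((3/4) * (K*(s₀/2)^n)) ≤ ENNReal.ofReal (A*s₀^2) * I := by
    have h0 : ENNReal.ofReal (K*(s₀/2)^n)
        ≤ ENNReal.ofReal ((K*(s₀/2)^n)/4) + ENNReal.ofReal (A*s₀^2) * I :=
      hmain.trans (add_le_add_left (ENNReal.ofReal_le_ofReal hreal_bad) _)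
    have h1 : ENNReal.ofReal (K*(s₀/2)^n) - ENNReal.ofReal ((K*(s₀/2)^n)/4)
        ≤ ENNReal.ofReal (A*s₀^2) * I := by
      rw [tsub_le_iff_left]
      exact h0
    calc ENNReal.ofReal ((3/4) * (K*(s₀/2)^n))
        = ENNReal.ofReal (K*(s₀/2)^n) - ENNReal.ofReal ((K*(s₀/2)^n)/4) := by
          rw [← ENNReal.ofReal_sub _ (by positivity)]
          congr 1
          ring
      _ ≤ _ := h1
  set c : ℝ := (3/4) * (K*(s₀/2)^n) / (A*s₀^2) with hcdef
  have hcpos' : 0 < c := by positivity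
  have hIc : ENNReal.ofReal c ≤ I := by
    have hmul : ENNReal.ofReal (A*s₀^2) * ENNReal.ofReal c
        = ENNReal.ofReal ((3/4) * (K*(s₀/2)^n)) := by
      rw [← ENNReal.ofReal_mul (by positivity)]
      congr 1
      rw [hcdef]
      field_simp
    rw [← hmul] at step2
    exact (ENNReal.mul_le_mul_iff_right (ENNReal.ofReal_pos.mpr (by positivity)).ne'
      ENNReal.ofReal_ne_top).mp step2
  refine ⟨s₀, ⟨hs₀pos, hs₀le1⟩, ?_⟩
  set J : ENNReal := ∫⁻ y in Metric.ball x s₀, ENNReal.ofReal (R y) ^ (((n:ℝ)-1)/2) ∂μ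
    with hJdef
  by_cases hJtop : J = ⊤
  · rw [hJtop]
    simp
  have hH := holder_aux μ n hn R hR (measurableSet_ball (x := x) (ε := s₀))
  have hn30 : (0:ℝ) ≤ ((n:ℝ)-3)/((n:ℝ)-1) := div_nonneg (by linarith) hn1.le
  set w : ℝ := (κ*s₀^n) ^ (((n:ℝ)-3)/((n:ℝ)-1)) with hwdef
  have hwpos : 0 < w := Real.rpow_pos_of_pos (by positivity) _
  have hμpow : (μ (Metric.ball x s₀)) ^ (((n:ℝ)-3)/((n:ℝ)-1)) ≤ ENNReal.ofReal w := by
    calc (μ (Metric.ball x s₀)) ^ (((n:ℝ)-3)/((n:ℝ)-1))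
        ≤ (ENNReal.ofReal (κ*s₀^n)) ^ (((n:ℝ)-3)/((n:ℝ)-1)) :=
          ENNReal.rpow_le_rpow hupper hn30
      _ = ENNReal.ofReal w := by
          rw [hwdef, ENNReal.ofReal_rpow_of_pos (by positivity)]
  have h2' : ENNReal.ofReal c ≤ J ^ ((2:ℝ)/((n:ℝ)-1)) * ENNReal.ofReal w :=
    hIc.trans (hH.trans (mul_le_mul_right hμpow _))
  have h3 : ENNReal.ofReal (c / w) ≤ J ^ ((2:ℝ)/((n:ℝ)-1)) := by
    have hmul : ENNReal.ofReal (c/w) * ENNReal.ofReal w = ENNReal.ofReal c := by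
      rw [← ENNReal.ofReal_mul (by positivity)]
      congr 1
      field_simp
    rw [← hmul] at h2'
    exact (ENNReal.mul_le_mul_iff_left (ENNReal.ofReal_pos.mpr hwpos).ne'
      ENNReal.ofReal_ne_top).mp h2'
  have h4 : ENNReal.ofReal ((c/w) ^ (((n:ℝ)-1)/2)) ≤ J := by
    calc ENNReal.ofReal ((c/w) ^ (((n:ℝ)-1)/2))
        = (ENNReal.ofReal (c/w)) ^ (((n:ℝ)-1)/2) :=
          (ENNReal.ofReal_rpow_of_pos (by positivity)).symm
      _ ≤ (J ^ ((2:ℝ)/((n:ℝ)-1))) ^ (((n:ℝ)-1)/2) :=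
          ENNReal.rpow_le_rpow h3 (by positivity)
      _ = J := by
          rw [← ENNReal.rpow_mul,
            show ((2:ℝ)/((n:ℝ)-1)) * (((n:ℝ)-1)/2) = 1 by field_simp]
          exact ENNReal.rpow_one J
  have hAκ4 : 4*(2:ℝ)^n*A*κ ≤ 3*K := by
    have step : 4*(2:ℝ)^n*A*κ = (4*2^n) * (A*κ^((2:ℝ)/(n:ℝ))) * K := by
      conv_lhs => rw [hκK]
      ring
    rw [step]
    calc (4*2^n) * (A*κ^((2:ℝ)/(n:ℝ))) * K ≤ (4*2^n) * (1/(2^n*48)) * K := by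
          have := mul_le_mul_of_nonneg_right
            (mul_le_mul_of_nonneg_left hAκn (by positivity : (0:ℝ) ≤ 4*2^n)) hKpos.le
          linarith
      _ ≤ 3*K := by
          rw [show (4*(2:ℝ)^n) * (1/(2^n*48)) = 1/12 by field_simp; ring]
          nlinarith [hKpos]
  have key : (κ*s₀) ^ ((2:ℝ)/((n:ℝ)-1)) ≤ c / w := by
    rw [le_div_iff₀ hwpos]
    have lhs_eq : (κ*s₀) ^ ((2:ℝ)/((n:ℝ)-1)) * w = κ * s₀ ^ ((n:ℝ)-2) := by
      rw [hwdef, Real.mul_rpow hκpos.le hs₀pos.le,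
        Real.mul_rpow hκpos.le (by positivity), ← Real.rpow_natCast s₀ n,
        ← Real.rpow_mul hs₀pos.le]
      calc κ ^ ((2:ℝ)/((n:ℝ)-1)) * s₀ ^ ((2:ℝ)/((n:ℝ)-1))
            * (κ ^ (((n:ℝ)-3)/((n:ℝ)-1)) * s₀ ^ ((n:ℝ)*(((n:ℝ)-3)/((n:ℝ)-1))))
          = (κ ^ ((2:ℝ)/((n:ℝ)-1)) * κ ^ (((n:ℝ)-3)/((n:ℝ)-1)))
            * (s₀ ^ ((2:ℝ)/((n:ℝ)-1)) * s₀ ^ ((n:ℝ)*(((n:ℝ)-3)/((n:ℝ)-1)))) := by ring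
        _ = κ ^ ((2:ℝ)/((n:ℝ)-1) + ((n:ℝ)-3)/((n:ℝ)-1))
            * s₀ ^ ((2:ℝ)/((n:ℝ)-1) + (n:ℝ)*(((n:ℝ)-3)/((n:ℝ)-1))) := by
            rw [← Real.rpow_add hκpos, ← Real.rpow_add hs₀pos]
        _ = κ * s₀ ^ ((n:ℝ)-2) := by
            rw [show (2:ℝ)/((n:ℝ)-1) + ((n:ℝ)-3)/((n:ℝ)-1) = 1 by field_simp; ring,
              show (2:ℝ)/((n:ℝ)-1) + (n:ℝ)*(((n:ℝ)-3)/((n:ℝ)-1)) = (n:ℝ)-2 by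
                field_simp; ring,
              Real.rpow_one]
    rw [lhs_eq, hcdef, le_div_iff₀ (by positivity)]
    have hsn2 : s₀ ^ ((n:ℝ)-2) * s₀^2 = s₀ ^ ((n:ℝ)) := by
      rw [show (s₀:ℝ)^2 = s₀^((2:ℝ)) by rw [Real.rpow_two], ← Real.rpow_add hs₀pos]
      ring_nf
    have hhalfn : ((s₀/2):ℝ)^n = s₀^((n:ℝ))/2^n := by
      rw [div_pow, Real.rpow_natCast]
    calc κ * s₀^((n:ℝ)-2) * (A*s₀^2)
        = (4*2^n*A*κ) * (s₀^((n:ℝ)-2)*s₀^2) / (4*2^n) := by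
          field_simp
          try ring
      _ ≤ (3*K) * (s₀^((n:ℝ)-2)*s₀^2) / (4*2^n) := by
          gcongr
          try positivity
      _ = 3/4 * (K*(s₀/2)^n) := by
          rw [hsn2, hhalfn]
          field_simp
          try ring
  have hfinal : κ * s₀ ≤ (c/w) ^ (((n:ℝ)-1)/2) := by
    have h := Real.rpow_le_rpow (by positivity) key
      (by positivity : (0:ℝ) ≤ ((n:ℝ)-1)/2)
    rwa [← Real.rpow_mul (by positivity),
      show ((2:ℝ)/((n:ℝ)-1)) * (((n:ℝ)-1)/2) = 1 by field_simp,
      Real.rpow_one] at h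
  exact le_trans (ENNReal.ofReal_le_ofReal hfinal) (h4.trans (le_add_left le_rfl))

set_option maxHeartbeats 1000000 in
/-- Dichotomy form of the diameter bound: with
`κ₀ = min ((2ⁿ(48A+4B))^{-n/2}) (ωₙ/2)`, if `diam(X) ≥ C₀ (1 + μ(X)/κ₀)` then
`diam(X) ≤ C₀ κ₀⁻¹ ∫ R^{(n-1)/2}`. -/
theorem diameter_dichotomy (n : ℕ) (hn : 3 ≤ n) :
    ∃ C₀ : ℝ, 0 < C₀ ∧
      ∀ (X : Type) [MetricSpace X] [CompactSpace X] [MeasurableSpace X] [BorelSpace X]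
        (μ : Measure X) [IsFiniteMeasure μ] (A B : ℝ) (R : X → ℝ),
        (∀ x : X, Tendsto (fun ρ : ℝ => (μ (Metric.ball x ρ)).toReal / ρ ^ n)
            (nhdsWithin 0 (Set.Ioi 0)) (nhds (unitBallVol n))) →
        (∀ x : X, ContinuousOn (fun ρ : ℝ => (μ (Metric.ball x ρ)).toReal)
            (Set.Ioi (0 : ℝ))) →
        (∀ a b : X, ∃ γ : ℝ → X, γ 0 = a ∧ γ (dist a b) = b ∧
            ∀ s ∈ Set.Icc (0 : ℝ) (dist a b), ∀ t ∈ Set.Icc (0 : ℝ) (dist a b),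
              dist (γ s) (γ t) = |s - t|) →
        0 < A → 0 ≤ B → Measurable R → (∀ y, 0 ≤ R y) →
        (∀ x : X, SobolevAt μ n A B R x 1) →
        ∀ κ₀ : ℝ,
          κ₀ = min ((2 ^ n * (48 * A + 4 * B)) ^ (-(n : ℝ) / 2)) (unitBallVol n / 2) →
          Metric.diam (Set.univ : Set X) ≥ C₀ * (1 + (μ Set.univ).toReal / κ₀) →
          ENNReal.ofReal (Metric.diam (Set.univ : Set X))
            ≤ ENNReal.ofReal (C₀ * κ₀⁻¹) *
                ∫⁻ y, ENNReal.ofReal (R y) ^ (((n : ℝ) - 1) / 2) ∂μ := by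
  refine ⟨20, by norm_num, ?_⟩
  intro X _ _ _ _ μ _ A B R hdens hcont hgeo hA hB hR hR0 hSob κ hκdef hdiam
  have hκpos : 0 < κ := by
    rw [hκdef]
    exact lt_min (Real.rpow_pos_of_pos (by positivity) _) (by linarith [unitBallVol_pos n])
  have hκ1 : κ ≤ (2 ^ n * (48 * A + 4 * B)) ^ (-(n : ℝ) / 2) := hκdef ▸ min_le_left _ _
  have hκ2 : κ ≤ unitBallVol n / 2 := hκdef ▸ min_le_right _ _
  set m : ℝ := (μ Set.univ).toReal with hmdef
  have hm0 : 0 ≤ m := ENNReal.toReal_nonneg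
  set L : ℝ := Metric.diam (Set.univ : Set X) with hLdef
  have hL20 : 20 * (1 + m / κ) ≤ L := hdiam
  have hLpos : 0 < L := by
    have : (0:ℝ) ≤ m / κ := div_nonneg hm0 hκpos.le
    linarith
  -- the measure μ + R^{(n-1)/2} μ
  set lam : Measure X := μ + μ.withDensity (fun y => ENNReal.ofReal (R y) ^ (((n:ℝ)-1)/2))
    with hlamdef
  have hlam_ball : ∀ (z : X) (rr : ℝ), lam (Metric.ball z rr)
      = μ (Metric.ball z rr)
        + ∫⁻ y in Metric.ball z rr, ENNReal.ofReal (R y) ^ (((n:ℝ)-1)/2) ∂μ := by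
    intro z rr
    rw [hlamdef, Measure.add_apply, withDensity_apply _ measurableSet_ball]
  -- nonemptiness
  have hXne : Nonempty X := by
    by_contra h
    rw [not_nonempty_iff] at h
    have huniv : (Set.univ : Set X) = ∅ := Set.univ_eq_empty_iff.mpr h
    rw [hLdef, huniv, Metric.diam_empty] at hLpos
    exact lt_irrefl _ hLpos
  -- a pair of points realizing the diameter
  obtain ⟨p, -, hp⟩ := (isCompact_univ (X := X × X)).exists_isMaxOn univ_nonempty
    (continuous_dist.continuousOn)
  have hdiam_eq : dist p.1 p.2 = L := by
    refine le_antisymm (Metric.dist_le_diam_of_mem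
      (isCompact_univ.isBounded) (mem_univ _) (mem_univ _)) ?_
    refine Metric.diam_le_of_forall_dist_le dist_nonneg (fun a _ b _ => ?_)
    exact hp (mem_univ ((a, b) : X × X))
  obtain ⟨γ, hγ0, hγ1, hγiso⟩ := hgeo p.1 p.2
  rw [hdiam_eq] at hγiso
  -- choose radii by the dichotomy
  have H : ∀ t : ℝ, ∃ rr : ℝ, rr ∈ Set.Ioc (0:ℝ) 1 ∧
      (t ∈ Set.Icc 0 L → ENNReal.ofReal (κ * rr) ≤ lam (Metric.ball (γ t) rr)) := by
    intro t
    obtain ⟨rr, hrr1, hrr2⟩ := dichotomy μ n hn A B R κ hdens hcont hA hB hR hR0 hSob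
      hκpos hκ1 hκ2 (γ t)
    exact ⟨rr, hrr1, fun _ => by rw [hlam_ball]; exact hrr2⟩
  choose r hr1 hr2 using H
  -- Vitali covering
  obtain ⟨u, hu_sub, hu_disj, hu_cov⟩ :=
    Vitali.exists_disjoint_subfamily_covering_enlargement_closedBall (Set.Icc (0:ℝ) L)
      (fun t => t) r 1 (fun t _ => (hr1 t).2) 4 (by norm_num)
  have hu_cnt : u.Countable := by
    refine hu_disj.countable_of_nonempty_interior (fun t _ => ?_)
    rw [interior_closedBall (t : ℝ) (ne_of_gt (hr1 t).1)]
    exact (Metric.nonempty_ball).mpr (hr1 t).1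
  have hcover : Set.Icc (0:ℝ) L ⊆ ⋃ b ∈ u, Metric.closedBall b (4 * r b) := by
    intro a ha
    obtain ⟨b, hb, hsub⟩ := hu_cov a ha
    exact Set.mem_biUnion hb (hsub (Metric.mem_closedBall_self (hr1 a).1.le))
  have hlen : ENNReal.ofReal L ≤ ∑' t : u, ENNReal.ofReal (8 * r t) := by
    calc ENNReal.ofReal L = volume (Set.Icc (0:ℝ) L) := by rw [Real.volume_Icc, sub_zero]
      _ ≤ volume (⋃ b ∈ u, Metric.closedBall b (4 * r b)) := measure_mono hcover
      _ ≤ ∑' t : u, volume (Metric.closedBall (t : ℝ) (4 * r t)) :=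
          measure_biUnion_le volume hu_cnt _
      _ = ∑' t : u, ENNReal.ofReal (8 * r t) := by
          refine tsum_congr (fun t => ?_)
          rw [Real.volume_closedBall]
          congr 1
          ring
  -- disjointness of the corresponding balls in X
  have hdisjX : u.PairwiseDisjoint (fun t => Metric.ball (γ t) (r t)) := by
    intro b hb c hc hbc
    have hd := hu_disj hb hc hbc
    have hgap : r b + r c < |b - c| := real_gap (hr1 b).1.le (hr1 c).1.le hd
    rw [Function.onFun, Set.disjoint_left]
    intro y hyb hyc
    have h1 : dist (γ b) (γ c) = |b - c| := hγiso b (hu_sub hb) c (hu_sub hc)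
    have h2 : dist (γ b) (γ c) ≤ dist y (γ b) + dist y (γ c) := by
      rw [dist_comm y (γ b)]
      exact dist_triangle _ _ _
    have h3 : dist y (γ b) < r b := Metric.mem_ball.mp hyb
    have h4 : dist y (γ c) < r c := Metric.mem_ball.mp hyc
    rw [h1] at h2
    linarith
  -- total mass bound
  have hmass : ENNReal.ofReal (κ/8) * ENNReal.ofReal L ≤ lam Set.univ := by
    calc ENNReal.ofReal (κ/8) * ENNReal.ofReal L
        ≤ ENNReal.ofReal (κ/8) * ∑' t : u, ENNReal.ofReal (8 * r t) :=
          mul_le_mul_right hlen _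
      _ = ∑' t : u, ENNReal.ofReal (κ/8) * ENNReal.ofReal (8 * r t) :=
          ENNReal.tsum_mul_left.symm
      _ = ∑' t : u, ENNReal.ofReal (κ * r t) := by
          refine tsum_congr (fun t => ?_)
          rw [← ENNReal.ofReal_mul (by positivity)]
          congr 1
          ring
      _ ≤ ∑' t : u, lam (Metric.ball (γ t) (r t)) :=
          ENNReal.tsum_le_tsum (fun t => hr2 t (hu_sub t.2))
      _ = lam (⋃ t ∈ u, Metric.ball (γ t) (r t)) :=
          (measure_biUnion hu_cnt hdisjX (fun t _ => measurableSet_ball)).symm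
      _ ≤ lam Set.univ := measure_mono (Set.subset_univ _)
  -- conclude
  set Jtot : ENNReal := ∫⁻ y, ENNReal.ofReal (R y) ^ (((n:ℝ)-1)/2) ∂μ with hJtotdef
  have hlam_univ : lam Set.univ = μ Set.univ + Jtot := by
    rw [hlamdef, Measure.add_apply, withDensity_apply _ MeasurableSet.univ,
      Measure.restrict_univ]
  have hμu : μ Set.univ ≤ ENNReal.ofReal (κ*L/16) := by
    rw [← ENNReal.ofReal_toReal (measure_ne_top μ Set.univ), ← hmdef]
    refine ENNReal.ofReal_le_ofReal ?_
    have h1 : 20 * κ + 20 * m ≤ κ * L := by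
      have h2 := mul_le_mul_of_nonneg_left hL20 hκpos.le
      have h3 : κ * (20 * (1 + m/κ)) = 20*κ + 20*m := by
        field_simp
      rw [h3] at h2
      linarith
    nlinarith [mul_nonneg hκpos.le hLpos.le]
  have h8 : ENNReal.ofReal (κ*L/8) ≤ μ Set.univ + Jtot := by
    rw [← hlam_univ]
    refine le_trans (le_of_eq ?_) hmass
    rw [← ENNReal.ofReal_mul (by positivity)]
    congr 1
    ring
  have hJ : ENNReal.ofReal (κ*L/16) ≤ Jtot := by
    have h1 : ENNReal.ofReal (κ*L/8) ≤ ENNReal.ofReal (κ*L/16) + Jtot :=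
      h8.trans (add_le_add_left hμu _)
    have h2 : ENNReal.ofReal (κ*L/8) - ENNReal.ofReal (κ*L/16) ≤ Jtot := by
      rw [tsub_le_iff_left]
      exact h1
    refine le_trans (le_of_eq ?_) h2
    rw [← ENNReal.ofReal_sub _ (by positivity)]
    congr 1
    ring
  calc ENNReal.ofReal L ≤ ENNReal.ofReal ((20*κ⁻¹) * (κ*L/16)) := by
        refine ENNReal.ofReal_le_ofReal ?_
        rw [show (20*κ⁻¹) * (κ*L/16) = (20/16) * (κ⁻¹*κ) * L by ring,
          inv_mul_cancel₀ hκpos.ne']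
        nlinarith
    _ = ENNReal.ofReal (20*κ⁻¹) * ENNReal.ofReal (κ*L/16) :=
        ENNReal.ofReal_mul (by positivity)
    _ ≤ ENNReal.ofReal (20*κ⁻¹) * Jtot := mul_le_mul_right hJ _
end

section
/- Let θ ∈ (0,1), c > 0, r > 0, and let W : (0,r] → (0,∞) be a function such that W(s) ≥ c · W(s/2)^θ for every s ∈ (0,r], and such that W(s) converges to a finite positive limit as s → 0⁺. Then W(r) ≥ c^{1/(1−θ)}. -/
open Set Filter

/-- Iteration lemma: if `W : (0,r] → (0,∞)` satisfies `W(s) ≥ c W(s/2)^θ` for all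
`s ∈ (0,r]` and `W` has a finite positive limit at `0⁺`, then `W(r) ≥ c^{1/(1-θ)}`. -/
theorem iteration_lemma (θ c r : ℝ) (hθ : θ ∈ Set.Ioo (0 : ℝ) 1) (hc : 0 < c)
    (hr : 0 < r) (W : ℝ → ℝ)
    (hWpos : ∀ s ∈ Set.Ioc (0 : ℝ) r, 0 < W s)
    (hWiter : ∀ s ∈ Set.Ioc (0 : ℝ) r, W s ≥ c * W (s / 2) ^ θ)
    (hWlim : ∃ L : ℝ, 0 < L ∧ Tendsto W (nhdsWithin 0 (Set.Ioi 0)) (nhds L)) :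
    W r ≥ c ^ (1 / (1 - θ)) := by
  obtain ⟨hθ0, hθ1⟩ := hθ
  obtain ⟨L, hL, hWL⟩ := hWlim
  have hmem : ∀ m : ℕ, r / 2 ^ m ∈ Set.Ioc (0 : ℝ) r := by
    intro m
    refine ⟨by positivity, ?_⟩
    calc r / 2 ^ m ≤ r / 1 := by
          apply div_le_div_of_nonneg_left hr.le one_pos
          exact one_le_pow₀ (by norm_num)
      _ = r := by ring
  -- key inductive bound
  have key : ∀ m : ℕ,
      W r ≥ c ^ (∑ i ∈ Finset.range m, θ ^ i) * (W (r / 2 ^ m)) ^ (θ ^ m) := by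
    intro m
    induction m with
    | zero => simp
    | succ m ih =>
      have hpos' := hWpos _ (hmem (m + 1))
      have h2 : r / 2 ^ m / 2 = r / 2 ^ (m + 1) := by ring
      have h1 := hWiter (r / 2 ^ m) (hmem m)
      rw [h2] at h1
      have hnn : (0:ℝ) ≤ c * W (r / 2 ^ (m + 1)) ^ θ := by positivity
      have h3 := Real.rpow_le_rpow hnn h1 (by positivity : (0:ℝ) ≤ θ ^ m)
      rw [Real.mul_rpow hc.le (Real.rpow_nonneg hpos'.le θ),
        ← Real.rpow_mul hpos'.le, mul_comm θ (θ ^ m), ← pow_succ] at h3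
      calc W r ≥ c ^ (∑ i ∈ Finset.range m, θ ^ i) * (W (r / 2 ^ m)) ^ (θ ^ m) := ih
        _ ≥ c ^ (∑ i ∈ Finset.range m, θ ^ i) *
            (c ^ (θ ^ m) * (W (r / 2 ^ (m + 1))) ^ (θ ^ (m + 1))) := by
          apply mul_le_mul_of_nonneg_left h3 (Real.rpow_nonneg hc.le _)
        _ = c ^ (∑ i ∈ Finset.range (m + 1), θ ^ i) *
            (W (r / 2 ^ (m + 1))) ^ (θ ^ (m + 1)) := by
          rw [Finset.sum_range_succ, Real.rpow_add hc, mul_assoc]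
  -- limits
  have hseq : Tendsto (fun m : ℕ => r / 2 ^ m) atTop (nhdsWithin 0 (Set.Ioi 0)) := by
    apply tendsto_nhdsWithin_of_tendsto_nhds_of_eventually_within
    · have : Tendsto (fun m : ℕ => ((1:ℝ)/2) ^ m) atTop (nhds 0) :=
        tendsto_pow_atTop_nhds_zero_of_lt_one (by norm_num) (by norm_num)
      have := this.const_mul r
      simpa [div_eq_mul_inv, mul_pow] using this
    · filter_upwards with m
      exact (hmem m).1
  have hWseq : Tendsto (fun m : ℕ => W (r / 2 ^ m)) atTop (nhds L) := hWL.comp hseq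
  have hθseq : Tendsto (fun m : ℕ => θ ^ m) atTop (nhds 0) :=
    tendsto_pow_atTop_nhds_zero_of_lt_one hθ0.le hθ1
  have hWpow : Tendsto (fun m : ℕ => (W (r / 2 ^ m)) ^ (θ ^ m)) atTop (nhds 1) := by
    have := hWseq.rpow hθseq (Or.inl hL.ne')
    simpa using this
  have hsum : Tendsto (fun m : ℕ => ∑ i ∈ Finset.range m, θ ^ i) atTop
      (nhds (1 / (1 - θ))) := by
    have := hasSum_geometric_of_lt_one hθ0.le hθ1
    simpa [one_div] using this.tendsto_sum_nat
  have hcpow : Tendsto (fun m : ℕ => c ^ (∑ i ∈ Finset.range m, θ ^ i)) atTop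
      (nhds (c ^ (1 / (1 - θ)))) := by
    exact (Real.continuousAt_const_rpow hc.ne').tendsto.comp hsum
  have htot : Tendsto (fun m : ℕ =>
      c ^ (∑ i ∈ Finset.range m, θ ^ i) * (W (r / 2 ^ m)) ^ (θ ^ m)) atTop
      (nhds (c ^ (1 / (1 - θ)))) := by
    have := hcpow.mul hWpow
    simpa using this
  exact le_of_tendsto' htot key
end
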